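/- In any symmetric GK-model (one with S(x,y) = S(y,x) for all x,y), the axioms M1: φ → □◇φ and M2: ◇□φ → φ are valid. -/
import Mathlib


open scoped Classical

noncomputable def gimp (a b : ℝ) : ℝ := if a ≤ b then 1 else b

inductive GForm : Type where
  | bot : GForm
  | var : ℕ → GForm
  | and : GForm → GForm → GForm
  | or : GForm → GForm → GForm
  | imp : GForm → GForm → GForm
  | box : GForm → GForm
  | dia : GForm → GForm

def GForm.neg (φ : GForm) : GForm := φ.imp .bot

noncomputable def ev {W : Type} (S : W → W → ℝ) (e : ℕ → W → ℝ) : GForm → W → ℝ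
  | .bot, _ => 0
  | .var p, x => e p x
  | .and φ ψ, x => min (ev S e φ x) (ev S e ψ x)
  | .or φ ψ, x => max (ev S e φ x) (ev S e ψ x)
  | .imp φ ψ, x => gimp (ev S e φ x) (ev S e ψ x)
  | .box φ, x => ⨅ y, gimp (S x y) (ev S e φ y)
  | .dia φ, x => ⨆ y, min (S x y) (ev S e φ y)


lemma gimp_mem {a b : ℝ} (hb : b ∈ Set.Icc (0:ℝ) 1) : gimp a b ∈ Set.Icc (0:ℝ) 1 := by
  unfold gimp; split <;> simp_all [Set.mem_Icc]

lemma gimp_mono {a b b' : ℝ} (hb : b ≤ 1) (h : b ≤ b') : gimp a b ≤ gimp a b' := by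
  unfold gimp
  split <;> split <;> first | exact le_refl _ | linarith

lemma le_gimp_min {a b : ℝ} (hb : b ≤ 1) : b ≤ gimp a (min a b) := by
  unfold gimp; split
  · exact hb
  · rcases min_cases a b with ⟨h1, h2⟩ | ⟨h1, h2⟩
    · linarith
    · rw [h1]

lemma min_gimp_le {a b : ℝ} : min a (gimp a b) ≤ b := by
  unfold gimp; split
  · exact min_le_of_left_le ‹_›
  · exact min_le_right _ _

lemma ev_mem {W : Type} [Nonempty W] (S : W → W → ℝ) (e : ℕ → W → ℝ)
    (hS : ∀ x y, S x y ∈ Set.Icc (0:ℝ) 1) (he : ∀ p x, e p x ∈ Set.Icc (0:ℝ) 1) :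
    ∀ ψ x, ev S e ψ x ∈ Set.Icc (0:ℝ) 1 := by
  intro ψ
  induction ψ with
  | bot => intro x; simp [ev]
  | var p => intro x; exact he p x
  | and φ ψ ih1 ih2 =>
      intro x
      have h1 := ih1 x; have h2 := ih2 x
      simp only [ev, Set.mem_Icc] at *
      constructor
      · exact le_min h1.1 h2.1
      · exact min_le_of_left_le h1.2
  | or φ ψ ih1 ih2 =>
      intro x
      have h1 := ih1 x; have h2 := ih2 x
      simp only [ev, Set.mem_Icc] at *
      constructor
      · exact le_max_of_le_left h1.1
      · exact max_le h1.2 h2.2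
  | imp φ ψ ih1 ih2 =>
      intro x; exact gimp_mem (ih2 x)
  | box φ ih =>
      intro x
      simp only [ev, Set.mem_Icc]
      constructor
      · exact le_ciInf fun y => (gimp_mem (ih y)).1
      · exact ciInf_le_of_le ⟨0, by rintro _ ⟨y, rfl⟩; exact (gimp_mem (ih y)).1⟩
          x (gimp_mem (ih x)).2
  | dia φ ih =>
      intro x
      simp only [ev, Set.mem_Icc]
      constructor
      · refine le_ciSup_of_le ⟨1, by rintro _ ⟨y, rfl⟩; exact min_le_of_right_le (ih y).2⟩ x ?_
        exact le_min (hS x x).1 (ih x).1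
      · exact ciSup_le fun y => min_le_of_right_le (ih y).2

theorem stmt9 (W : Type) [Nonempty W] (S : W → W → ℝ) (e : ℕ → W → ℝ)
    (hS : ∀ x y, S x y ∈ Set.Icc (0:ℝ) 1) (he : ∀ p x, e p x ∈ Set.Icc (0:ℝ) 1)
    (hsymm : ∀ x y, S x y = S y x) (φ : GForm) (x : W) :
    ev S e (.imp φ (.box (.dia φ))) x = 1 ∧
    ev S e (.imp (.dia (.box φ)) φ) x = 1 := by
  have hev := ev_mem S e hS he
  constructor
  · have h : ev S e φ x ≤ ev S e (.box (.dia φ)) x := by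
      refine le_ciInf fun y => ?_
      have h1 : min (S x y) (ev S e φ x) ≤ ⨆ z, min (S y z) (ev S e φ z) := by
        refine le_ciSup_of_le ⟨1, by rintro _ ⟨z, rfl⟩; exact min_le_of_right_le (hev φ z).2⟩ x ?_
        rw [hsymm y x]
      calc ev S e φ x ≤ gimp (S x y) (min (S x y) (ev S e φ x)) := le_gimp_min (hev φ x).2
        _ ≤ _ := gimp_mono (min_le_of_left_le (hS x y).2) h1
    simp only [ev] at h ⊢
    exact if_pos h
  · have h : ev S e (.dia (.box φ)) x ≤ ev S e φ x := by
      refine ciSup_le fun y => ?_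
      have h1 : (⨅ z, gimp (S y z) (ev S e φ z)) ≤ gimp (S x y) (ev S e φ x) := by
        have := ciInf_le (f := fun z => gimp (S y z) (ev S e φ z))
          ⟨0, by rintro _ ⟨z, rfl⟩; exact (gimp_mem (hev φ z)).1⟩ x
        rwa [hsymm y x] at this
      calc min (S x y) (⨅ z, gimp (S y z) (ev S e φ z))
          ≤ min (S x y) (gimp (S x y) (ev S e φ x)) := min_le_min_left _ h1
        _ ≤ ev S e φ x := min_gimp_le
    simp only [ev] at h ⊢
    exact if_pos h
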